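/- arXiv:2309.07865 — 4 statements merged into one kernel-verified Lean document; each statement's English description precedes it below -/
import Mathlib

section
/- Let A be an invertible n×n real matrix, d ∈ ℝⁿ with A d ≠ 0, F an n×n real matrix, r = A(I + F)d, w = A d, and α = ⟨r, w⟩ / ‖w‖². Then |α − 1| ≤ ‖A‖ · ‖A⁻¹‖ · ‖F‖, where matrix norms are operator norms induced by the Euclidean vector norm. That is, |α − 1| ≤ cond(A)·‖F‖ with cond(A) = ‖A‖‖A⁻¹‖ the condition number of A. -/
open scoped RealInnerProductSpace
open Matrix

/-- Let `A` be an invertible `n×n` real matrix, `d ∈ ℝⁿ` with `A d ≠ 0`,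
`F` an `n×n` real matrix, `r = A (I + F) d`, `w = A d`, and `α = ⟨r, w⟩ / ‖w‖²`. Then
`|α - 1| ≤ ‖A‖ ⬝ ‖A⁻¹‖ ⬝ ‖F‖ = cond(A) ‖F‖`, where matrix norms are the operator norms
induced by the Euclidean vector norm. -/
theorem stmt_10 {n : ℕ} (A : Matrix (Fin n) (Fin n) ℝ) (hA : IsUnit A)
    (d : EuclideanSpace ℝ (Fin n)) (hd : toEuclideanLin A d ≠ 0)
    (F : Matrix (Fin n) (Fin n) ℝ)
    (r w : EuclideanSpace ℝ (Fin n))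
    (hrdef : r = toEuclideanLin (A * (1 + F)) d)
    (hwdef : w = toEuclideanLin A d)
    (α : ℝ) (hα : α = ⟪r, w⟫ / ‖w‖ ^ 2) :
    |α - 1| ≤ ‖toEuclideanCLM (𝕜 := ℝ) A‖ * ‖toEuclideanCLM (𝕜 := ℝ) A⁻¹‖ *
      ‖toEuclideanCLM (𝕜 := ℝ) F‖ := by
  set TA := toEuclideanCLM (𝕜 := ℝ) A with hTA
  set TF := toEuclideanCLM (𝕜 := ℝ) F with hTF
  set TAi := toEuclideanCLM (𝕜 := ℝ) A⁻¹ with hTAi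
  have hfun : ∀ (M : Matrix (Fin n) (Fin n) ℝ) (x : EuclideanSpace ℝ (Fin n)),
      toEuclideanCLM (𝕜 := ℝ) M x = toEuclideanLin M x := fun M x => rfl
  have hw : w = TA d := by rw [hwdef, hfun]
  have hwne : w ≠ 0 := by rw [hwdef]; exact hd
  have hwpos : (0 : ℝ) < ‖w‖ := norm_pos_iff.mpr hwne
  have hr : r = TA d + TA (TF d) := by
    rw [hrdef, ← hfun, _root_.map_mul, _root_.map_add, _root_.map_one]
    simp [ContinuousLinearMap.mul_apply, TA, TF]
  -- d = TAi w
  have hdw : d = TAi w := by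
    have h0 : TAi (TA d) = toEuclideanCLM (𝕜 := ℝ) (A⁻¹ * A) d := by
      rw [_root_.map_mul]; rfl
    rw [hw, h0, Matrix.nonsing_inv_mul A ((Matrix.isUnit_iff_isUnit_det A).mp hA),
      _root_.map_one, ContinuousLinearMap.one_apply]
  have hdnorm : ‖d‖ ≤ ‖TAi‖ * ‖w‖ := by
    rw [hdw]; exact TAi.le_opNorm w
  have hnum : α - 1 = ⟪TA (TF d), w⟫ / ‖w‖ ^ 2 := by
    rw [hα, hr, hw]
    rw [inner_add_left]
    rw [← hw, real_inner_self_eq_norm_sq w]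
    field_simp
    ring
  rw [hnum, abs_div]
  rw [div_le_iff₀ (by positivity)]
  have hTAdF : ‖TA (TF d)‖ ≤ ‖TA‖ * (‖TF‖ * ‖d‖) :=
    (TA.le_opNorm (TF d)).trans
      (mul_le_mul_of_nonneg_left (TF.le_opNorm d) TA.opNorm_nonneg)
  calc |⟪TA (TF d), w⟫| ≤ ‖TA (TF d)‖ * ‖w‖ := abs_real_inner_le_norm _ _
    _ ≤ (‖TA‖ * (‖TF‖ * ‖d‖)) * ‖w‖ :=
        mul_le_mul_of_nonneg_right hTAdF (norm_nonneg w)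
    _ ≤ (‖TA‖ * (‖TF‖ * (‖TAi‖ * ‖w‖))) * ‖w‖ := by
        gcongr
    _ = ‖TA‖ * ‖TAi‖ * ‖TF‖ * |‖w‖ ^ 2| := by
        rw [abs_of_nonneg (by positivity)]; ring
end

section
/- Let A be an invertible n×n real matrix, x, xₘ, d ∈ ℝⁿ, F an n×n real matrix with operator norm ‖F‖ < 1, and α ∈ ℝ. Suppose A(I + F)d = A(x − xₘ) and xₘ₊₁ = xₘ + α d. Then ‖xₘ₊₁ − x‖ ≤ ((|α − 1| + ‖F‖) / (1 − ‖F‖)) · ‖xₘ − x‖. -/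
open Matrix

/-- Let `A` be an invertible `n×n` real matrix, `x, xₘ, d ∈ ℝⁿ`, `F` an
`n×n` real matrix with operator norm `‖F‖ < 1`, and `α ∈ ℝ`. Suppose
`A (I + F) d = A (x - xₘ)` and `xₘ₊₁ = xₘ + α d`. Then
`‖xₘ₊₁ - x‖ ≤ ((|α - 1| + ‖F‖) / (1 - ‖F‖)) ⬝ ‖xₘ - x‖`. -/
theorem stmt_11 {n : ℕ} (A : Matrix (Fin n) (Fin n) ℝ) (hA : IsUnit A)
    (x xm d : EuclideanSpace ℝ (Fin n)) (F : Matrix (Fin n) (Fin n) ℝ)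
    (hF : ‖toEuclideanCLM (𝕜 := ℝ) F‖ < 1) (α : ℝ)
    (hd : toEuclideanLin (A * (1 + F)) d = toEuclideanLin A (x - xm))
    (xm1 : EuclideanSpace ℝ (Fin n)) (hup : xm1 = xm + α • d) :
    ‖xm1 - x‖ ≤ ((|α - 1| + ‖toEuclideanCLM (𝕜 := ℝ) F‖) /
      (1 - ‖toEuclideanCLM (𝕜 := ℝ) F‖)) * ‖xm - x‖ := by
  set T := toEuclideanCLM (𝕜 := ℝ) F with hT
  -- From hd, using injectivity of A, get d + T d = x - xm
  have hinj : Function.Injective (A.mulVec) := mulVec_injective_iff_isUnit.mpr hA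
  have key : d + T d = x - xm := by
    have h1 : toEuclideanLin ((1 : Matrix (Fin n) (Fin n) ℝ) + F) d = x - xm := by
      have := hd
      rw [toEuclideanLin_apply, toEuclideanLin_apply, ← mulVec_mulVec] at this
      have h2 := hinj ((WithLp.equiv 2 _).symm.injective.eq_iff.mp this)
      rw [toEuclideanLin_apply]
      rw [h2]
    have hTd : T d = toEuclideanLin F d := by
      rw [← coe_toEuclideanCLM_eq_toEuclideanLin]; rfl
    rw [← h1, map_add, hTd]
    congr 1
    rw [toEuclideanLin_apply]
    simp
  have hd_bound : (1 - ‖T‖) * ‖d‖ ≤ ‖xm - x‖ := by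
    have h1 : ‖xm - x‖ = ‖d + T d‖ := by rw [key, ← norm_neg]; congr 1; abel
    have h2 : ‖d‖ - ‖T d‖ ≤ ‖d + T d‖ := by
      have := norm_le_add_norm_add d (T d)
      linarith
    have h3 : ‖T d‖ ≤ ‖T‖ * ‖d‖ := T.le_opNorm d
    nlinarith [norm_nonneg d]
  have hx1 : xm1 - x = (α - 1) • d - T d := by
    rw [hup]
    have : x = xm + (d + T d) := by rw [key]; abel
    rw [this]
    module
  have hbound : ‖xm1 - x‖ ≤ (|α - 1| + ‖T‖) * ‖d‖ := by
    rw [hx1]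
    calc ‖(α - 1) • d - T d‖ ≤ ‖(α - 1) • d‖ + ‖T d‖ := norm_sub_le _ _
      _ ≤ |α - 1| * ‖d‖ + ‖T‖ * ‖d‖ := by
          rw [norm_smul, Real.norm_eq_abs]
          exact add_le_add le_rfl (T.le_opNorm d)
      _ = (|α - 1| + ‖T‖) * ‖d‖ := by ring
  have h1F : 0 < 1 - ‖T‖ := by linarith
  rw [div_mul_eq_mul_div, le_div_iff₀ h1F]
  calc ‖xm1 - x‖ * (1 - ‖T‖) ≤ ((|α - 1| + ‖T‖) * ‖d‖) * (1 - ‖T‖) := by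
        apply mul_le_mul_of_nonneg_right hbound h1F.le
    _ = (|α - 1| + ‖T‖) * ((1 - ‖T‖) * ‖d‖) := by ring
    _ ≤ (|α - 1| + ‖T‖) * ‖xm - x‖ := by
        apply mul_le_mul_of_nonneg_left hd_bound
        positivity
end

section
/- Let A be an invertible n×n real matrix, x, xₘ, d ∈ ℝⁿ with A d ≠ 0, and F an n×n real matrix with operator norm ‖F‖ < 1. Suppose A(I + F)d = A(x − xₘ), r = A(x − xₘ), w = A d, α = ⟨r, w⟩/‖w‖², and xₘ₊₁ = xₘ + α d. Then ‖xₘ₊₁ − x‖ ≤ ((1 + ‖A‖‖A⁻¹‖) ‖F‖ / (1 − ‖F‖)) · ‖xₘ − x‖. -/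
open scoped RealInnerProductSpace
open Matrix

set_option maxHeartbeats 1000000 in
/-- Let `A` be an invertible `n×n` real matrix, `x, xₘ, d ∈ ℝⁿ` with
`A d ≠ 0`, and `F` an `n×n` real matrix with operator norm `‖F‖ < 1`. Suppose
`A (I + F) d = A (x - xₘ)`, `r = A (x - xₘ)`, `w = A d`, `α = ⟨r, w⟩ / ‖w‖²`, and
`xₘ₊₁ = xₘ + α d`. Then
`‖xₘ₊₁ - x‖ ≤ ((1 + ‖A‖ ‖A⁻¹‖) ‖F‖ / (1 - ‖F‖)) ⬝ ‖xₘ - x‖`. -/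
theorem stmt_12 {n : ℕ} (A : Matrix (Fin n) (Fin n) ℝ) (hA : IsUnit A)
    (x xm d : EuclideanSpace ℝ (Fin n)) (hd : toEuclideanLin A d ≠ 0)
    (F : Matrix (Fin n) (Fin n) ℝ) (hF : ‖toEuclideanCLM (𝕜 := ℝ) F‖ < 1)
    (hFd : toEuclideanLin (A * (1 + F)) d = toEuclideanLin A (x - xm))
    (r w : EuclideanSpace ℝ (Fin n))
    (hrdef : r = toEuclideanLin A (x - xm))
    (hwdef : w = toEuclideanLin A d)
    (α : ℝ) (hα : α = ⟪r, w⟫ / ‖w‖ ^ 2)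
    (xm1 : EuclideanSpace ℝ (Fin n)) (hup : xm1 = xm + α • d) :
    ‖xm1 - x‖ ≤ ((1 + ‖toEuclideanCLM (𝕜 := ℝ) A‖ * ‖toEuclideanCLM (𝕜 := ℝ) A⁻¹‖) *
      ‖toEuclideanCLM (𝕜 := ℝ) F‖ / (1 - ‖toEuclideanCLM (𝕜 := ℝ) F‖)) * ‖xm - x‖ := by
  set Ac := toEuclideanCLM (𝕜 := ℝ) A with hAc
  set Fc := toEuclideanCLM (𝕜 := ℝ) F with hFcdef
  set Ai := toEuclideanCLM (𝕜 := ℝ) A⁻¹ with hAidef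
  have hlin : ∀ (M : Matrix (Fin n) (Fin n) ℝ) (v : EuclideanSpace ℝ (Fin n)),
      toEuclideanLin M v = toEuclideanCLM (𝕜 := ℝ) M v := fun M v => by
    rw [← Matrix.coe_toEuclideanCLM_eq_toEuclideanLin]; rfl
  set e := x - xm with he
  have hAiA : A⁻¹ * A = 1 := Matrix.nonsing_inv_mul A ((Matrix.isUnit_iff_isUnit_det A).mp hA)
  have hinv : ∀ v, Ai (Ac v) = v := fun v => by
    have h1 : (toEuclideanCLM (𝕜 := ℝ) (A⁻¹ * A)) v = v := by
      rw [hAiA, _root_.map_one]; rfl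
    rw [_root_.map_mul] at h1
    exact h1
  -- d + Fc d = e
  have hde : d + Fc d = e := by
    have h1 := hFd
    rw [hlin, hlin, _root_.map_mul, ContinuousLinearMap.mul_apply] at h1
    have h2 := congrArg Ai h1
    rw [hinv, hinv] at h2
    rw [← h2, _root_.map_add, _root_.map_one, ContinuousLinearMap.add_apply,
      ContinuousLinearMap.one_apply]
  have hf0 : (0:ℝ) ≤ ‖Fc‖ := norm_nonneg _
  have h1f : (0:ℝ) < 1 - ‖Fc‖ := by linarith
  have hFdle : ‖Fc d‖ ≤ ‖Fc‖ * ‖d‖ := Fc.le_opNorm d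
  have hdnorm : ‖d‖ ≤ ‖e‖ / (1 - ‖Fc‖) := by
    rw [le_div_iff₀ h1f]
    have hd1 : ‖d‖ ≤ ‖e‖ + ‖Fc d‖ := by
      calc ‖d‖ = ‖e - Fc d‖ := by congr 1; rw [← hde]; abel
        _ ≤ ‖e‖ + ‖Fc d‖ := norm_sub_le _ _
    nlinarith
  have hr : r = Ac e := by rw [hrdef, hlin]
  have hw : w = Ac d := by rw [hwdef, hlin]
  have hwne : w ≠ 0 := by rw [hwdef]; exact hd
  have hwpos : (0:ℝ) < ‖w‖ := norm_pos_iff.mpr hwne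
  have hrw : r - w = Ac (Fc d) := by
    rw [hr, hw, ← map_sub]
    congr 1
    rw [← hde]; abel
  have hrwle : ‖r - w‖ ≤ ‖Ac‖ * (‖Fc‖ * ‖d‖) := by
    rw [hrw]
    calc ‖Ac (Fc d)‖ ≤ ‖Ac‖ * ‖Fc d‖ := Ac.le_opNorm _
      _ ≤ ‖Ac‖ * (‖Fc‖ * ‖d‖) := mul_le_mul_of_nonneg_left hFdle (norm_nonneg _)
  have hdAi : d = Ai w := by rw [hw, hinv]
  have hdle : ‖d‖ ≤ ‖Ai‖ * ‖w‖ := hdAi ▸ Ai.le_opNorm w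
  -- |α - 1|
  have hw2 : ‖w‖ ^ 2 ≠ 0 := by positivity
  have hα1 : α - 1 = ⟪r - w, w⟫ / ‖w‖ ^ 2 := by
    rw [hα, inner_sub_left, real_inner_self_eq_norm_sq, sub_div, div_self hw2]
  have habs : |α - 1| ≤ ‖r - w‖ / ‖w‖ := by
    rw [hα1, abs_div, abs_of_nonneg (sq_nonneg ‖w‖)]
    rw [div_le_div_iff₀ (by positivity) hwpos]
    calc |⟪r - w, w⟫| * ‖w‖ ≤ (‖r - w‖ * ‖w‖) * ‖w‖ :=
          mul_le_mul_of_nonneg_right (abs_real_inner_le_norm (r - w) w) (norm_nonneg w)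
      _ = ‖r - w‖ * ‖w‖ ^ 2 := by ring
  have hkey : |α - 1| * ‖d‖ ≤ ‖Ac‖ * ‖Ai‖ * ‖Fc‖ * ‖d‖ := by
    have h1 : |α - 1| * ‖d‖ ≤ (‖r - w‖ / ‖w‖) * (‖Ai‖ * ‖w‖) :=
      mul_le_mul habs hdle (norm_nonneg _) (by positivity)
    have h2 : (‖r - w‖ / ‖w‖) * (‖Ai‖ * ‖w‖) = ‖Ai‖ * ‖r - w‖ := by
      rw [mul_comm ‖Ai‖ ‖w‖, ← mul_assoc, div_mul_cancel₀ _ (ne_of_gt hwpos), mul_comm]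
    rw [h2] at h1
    calc |α - 1| * ‖d‖ ≤ ‖Ai‖ * ‖r - w‖ := h1
      _ ≤ ‖Ai‖ * (‖Ac‖ * (‖Fc‖ * ‖d‖)) :=
        mul_le_mul_of_nonneg_left hrwle (norm_nonneg _)
      _ = ‖Ac‖ * ‖Ai‖ * ‖Fc‖ * ‖d‖ := by ring
  have hx1 : xm1 - x = (α - 1) • d - Fc d := by
    have h3 : x = xm + (d + Fc d) := by rw [hde, he]; abel
    rw [hup, sub_smul, one_smul, h3]
    abel
  have hnorm1 : ‖xm1 - x‖ ≤ |α - 1| * ‖d‖ + ‖Fc‖ * ‖d‖ := by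
    rw [hx1]
    refine le_trans (norm_sub_le _ _) ?_
    rw [norm_smul, Real.norm_eq_abs]
    linarith
  have hxm : ‖xm - x‖ = ‖e‖ := by
    rw [he, ← norm_neg]; congr 1; abel
  rw [hxm]
  have hfinal : ‖xm1 - x‖ ≤ (1 + ‖Ac‖ * ‖Ai‖) * ‖Fc‖ * ‖d‖ := by nlinarith
  calc ‖xm1 - x‖ ≤ (1 + ‖Ac‖ * ‖Ai‖) * ‖Fc‖ * ‖d‖ := hfinal
    _ ≤ (1 + ‖Ac‖ * ‖Ai‖) * ‖Fc‖ * (‖e‖ / (1 - ‖Fc‖)) := by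
        have hpos : (0:ℝ) ≤ (1 + ‖Ac‖ * ‖Ai‖) * ‖Fc‖ := by positivity
        exact mul_le_mul_of_nonneg_left hdnorm hpos
    _ = (1 + ‖Ac‖ * ‖Ai‖) * ‖Fc‖ / (1 - ‖Fc‖) * ‖e‖ := by ring
end

section
/- Let A be an invertible n×n real matrix and b ∈ ℝⁿ, with exact solution x = A⁻¹b. Let ε be a real number with 0 ≤ ε < 1/(2 + ‖A‖‖A⁻¹‖). Suppose sequences (xₘ), (dₘ) in ℝⁿ and (Fₘ) of n×n real matrices satisfy, for every m: (i) A(I + Fₘ)dₘ = rₘ where rₘ = b − A xₘ; (ii) ‖Fₘ‖ ≤ ε (operator norm induced by the Euclidean norm); and (iii) xₘ₊₁ = xₘ + αₘ dₘ where αₘ = ⟨rₘ, A dₘ⟩/‖A dₘ‖² if A dₘ ≠ 0 and αₘ = 0 otherwise. Then for every m, ‖xₘ − x‖ ≤ ρᵐ ‖x₀ − x‖ with ρ = (1 + ‖A‖‖A⁻¹‖)ε/(1 − ε) < 1; in particular, xₘ converges to x. -/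
open scoped RealInnerProductSpace
open Matrix

lemma aux_min_step {E : Type*} [NormedAddCommGroup E] [InnerProductSpace ℝ E]
    (r w : E) (hw : w ≠ 0) :
    ‖r - (⟪r, w⟫ / ‖w‖ ^ 2) • w‖ ≤ ‖r - w‖ := by
  have hw' : ‖w‖ ≠ 0 := norm_ne_zero_iff.mpr hw
  have hw2 : (0:ℝ) < ‖w‖ ^ 2 := by positivity
  set t : ℝ := ⟪r, w⟫ / ‖w‖ ^ 2 with ht
  have h1 : ‖r - t • w‖ ^ 2 = ‖r‖ ^ 2 - 2 * t * ⟪r, w⟫ + t ^ 2 * ‖w‖ ^ 2 := by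
    rw [@norm_sub_sq_real, real_inner_smul_right, norm_smul]
    rw [mul_pow, Real.norm_eq_abs, sq_abs]
    ring
  have h2 : ‖r - w‖ ^ 2 = ‖r‖ ^ 2 - 2 * ⟪r, w⟫ + ‖w‖ ^ 2 := by
    rw [@norm_sub_sq_real]
  have htm : t * ‖w‖ ^ 2 = ⟪r, w⟫ := div_mul_cancel₀ _ hw2.ne'
  have key : ‖r - t • w‖ ^ 2 ≤ ‖r - w‖ ^ 2 := by
    rw [h1, h2]
    nlinarith [sq_nonneg (‖w‖ ^ 2 - ⟪r, w⟫), sq_nonneg (t - 1), mul_pos hw2 hw2]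
  nlinarith [key, norm_nonneg (r - t • w), norm_nonneg (r - w)]

set_option maxHeartbeats 2000000 in
/-- Let `A` be an invertible `n×n` real matrix, `b ∈ ℝⁿ`, with exact
solution `x = A⁻¹ b`, and let `0 ≤ ε < 1/(2 + ‖A‖‖A⁻¹‖)`. Suppose for every `m`:
(i) `A (I + Fₘ) dₘ = rₘ` with `rₘ = b - A xₘ`; (ii) `‖Fₘ‖ ≤ ε`; and
(iii) `xₘ₊₁ = xₘ + αₘ dₘ` with `αₘ = ⟨rₘ, A dₘ⟩/‖A dₘ‖²` if `A dₘ ≠ 0`, else `αₘ = 0`.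
Then `‖xₘ - x‖ ≤ ρᵐ ‖x₀ - x‖` with `ρ = (1 + ‖A‖‖A⁻¹‖) ε/(1 - ε) < 1`; in particular,
`xₘ → x`. -/
theorem stmt_14 {n : ℕ} (A : Matrix (Fin n) (Fin n) ℝ) (hA : IsUnit A)
    (b : EuclideanSpace ℝ (Fin n)) (xsol : EuclideanSpace ℝ (Fin n))
    (hxsol : xsol = toEuclideanLin A⁻¹ b)
    (ε : ℝ) (hε0 : 0 ≤ ε)
    (hε1 : ε < 1 / (2 + ‖toEuclideanCLM (𝕜 := ℝ) A‖ * ‖toEuclideanCLM (𝕜 := ℝ) A⁻¹‖))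
    (x d : ℕ → EuclideanSpace ℝ (Fin n)) (F : ℕ → Matrix (Fin n) (Fin n) ℝ)
    (r : ℕ → EuclideanSpace ℝ (Fin n)) (α : ℕ → ℝ)
    (hr : ∀ m, r m = b - toEuclideanLin A (x m))
    (hFd : ∀ m, toEuclideanLin (A * (1 + F m)) (d m) = r m)
    (hF : ∀ m, ‖toEuclideanCLM (𝕜 := ℝ) (F m)‖ ≤ ε)
    (hα : ∀ m, (toEuclideanLin A (d m) ≠ 0 →
        α m = ⟪r m, toEuclideanLin A (d m)⟫ / ‖toEuclideanLin A (d m)‖ ^ 2) ∧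
      (toEuclideanLin A (d m) = 0 → α m = 0))
    (hx : ∀ m, x (m + 1) = x m + α m • d m) :
    ((1 + ‖toEuclideanCLM (𝕜 := ℝ) A‖ * ‖toEuclideanCLM (𝕜 := ℝ) A⁻¹‖) * ε / (1 - ε) < 1) ∧
    (∀ m, ‖x m - xsol‖ ≤
      ((1 + ‖toEuclideanCLM (𝕜 := ℝ) A‖ * ‖toEuclideanCLM (𝕜 := ℝ) A⁻¹‖) * ε / (1 - ε)) ^ m *
        ‖x 0 - xsol‖) ∧
    Filter.Tendsto x Filter.atTop (nhds xsol) := by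
  have hr' : ∀ m, r m = b - toEuclideanCLM (𝕜 := ℝ) A (x m) := hr
  have hFd2 : ∀ m, toEuclideanCLM (𝕜 := ℝ) (A * (1 + F m)) (d m) = r m := hFd
  have hα' : ∀ m, (toEuclideanCLM (𝕜 := ℝ) A (d m) ≠ 0 →
      α m = ⟪r m, toEuclideanCLM (𝕜 := ℝ) A (d m)⟫ / ‖toEuclideanCLM (𝕜 := ℝ) A (d m)‖ ^ 2) ∧
      (toEuclideanCLM (𝕜 := ℝ) A (d m) = 0 → α m = 0) := hα
  have hxsol' : xsol = toEuclideanCLM (𝕜 := ℝ) A⁻¹ b := hxsol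
  clear hr hFd hα hxsol
  set T := toEuclideanCLM (𝕜 := ℝ) A with hTdef
  set Ti := toEuclideanCLM (𝕜 := ℝ) A⁻¹ with hTidef
  set K : ℝ := ‖T‖ * ‖Ti‖ with hKdef
  have hdet : IsUnit A.det := (isUnit_iff_isUnit_det A).mp hA
  have hTiT : ∀ v, Ti (T v) = v := by
    intro v
    have h1 : A⁻¹ * A = 1 := nonsing_inv_mul A hdet
    have : toEuclideanCLM (𝕜 := ℝ) (A⁻¹ * A) v = v := by
      rw [h1, _root_.map_one]; rfl
    rw [_root_.map_mul] at this
    exact this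
  have hTTi : ∀ v, T (Ti v) = v := by
    intro v
    have h1 : A * A⁻¹ = 1 := mul_nonsing_inv A hdet
    have : toEuclideanCLM (𝕜 := ℝ) (A * A⁻¹) v = v := by
      rw [h1, _root_.map_one]; rfl
    rw [_root_.map_mul] at this
    exact this
  clear_value T Ti K
  have hK0 : (0:ℝ) ≤ K := hKdef ▸ mul_nonneg (norm_nonneg _) (norm_nonneg _)
  have h2K : (0:ℝ) < 2 + K := by linarith
  have hεK : ε * (2 + K) < 1 := by
    have := (lt_div_iff₀ h2K).mp hε1
    linarith
  have h1ε : (0:ℝ) < 1 - ε := by nlinarith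
  have hρ0 : (0:ℝ) ≤ (1 + K) * ε / (1 - ε) :=
    div_nonneg (mul_nonneg (by linarith) hε0) h1ε.le
  have hρ1 : (1 + K) * ε / (1 - ε) < 1 := by
    rw [div_lt_one h1ε]; nlinarith
  have hb : T xsol = b := by rw [hxsol']; exact hTTi b
  -- key contraction step
  have key : ∀ m, ‖x (m + 1) - xsol‖ ≤ ((1 + K) * ε / (1 - ε)) * ‖x m - xsol‖ := by
    intro m
    set G := toEuclideanCLM (𝕜 := ℝ) (F m) with hGdef
    have hrm : r m = -(T (x m - xsol)) := by
      have h : r m = b - T (x m) := hr' m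
      rw [h, map_sub, ← hb]; abel
    have hFd' : T (d m) + T (G (d m)) = r m := by
      have h : toEuclideanCLM (𝕜 := ℝ) (A * (1 + F m)) (d m) = r m := hFd2 m
      rw [_root_.map_mul, _root_.map_add, _root_.map_one, ← hTdef, ← hGdef] at h
      simpa [ContinuousLinearMap.mul_apply, ContinuousLinearMap.add_apply,
        ContinuousLinearMap.one_apply, map_add] using h
    have h2 : d m + G (d m) = -(x m - xsol) := by
      have h := congrArg Ti hFd'
      rw [map_add, hTiT, hTiT, hrm, map_neg, hTiT] at h
      exact h
    have hGd : ‖G (d m)‖ ≤ ε * ‖d m‖ :=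
      le_trans (G.le_opNorm _) (mul_le_mul_of_nonneg_right (hF m) (norm_nonneg _))
    have h3 : (1 - ε) * ‖d m‖ ≤ ‖x m - xsol‖ := by
      have habs : ‖d m‖ ≤ ‖d m + G (d m)‖ + ‖G (d m)‖ := by
        have h := norm_add_le (d m + G (d m)) (-(G (d m)))
        simpa using h
      rw [h2, norm_neg] at habs
      linarith
    by_cases hw : T (d m) = 0
    · have hd0 : d m = 0 := by
        have h := congrArg Ti hw
        rw [hTiT, map_zero] at h
        exact h
      have he0 : x m - xsol = 0 := by
        have h := h2
        rw [hd0, map_zero, add_zero] at h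
        exact neg_eq_zero.mp h.symm
      have hα0 : α m = 0 := (hα' m).2 hw
      rw [hx m, hα0, zero_smul, add_zero]
      simp [he0]
    · have hαm : α m = ⟪r m, T (d m)⟫ / ‖T (d m)‖ ^ 2 := (hα' m).1 hw
      have hmin : ‖r m - α m • T (d m)‖ ≤ ‖r m - T (d m)‖ := by
        rw [hαm]; exact aux_min_step _ _ hw
      have hres : r m - T (d m) = T (G (d m)) := by rw [← hFd']; abel
      have hresn : ‖r m - T (d m)‖ ≤ ‖T‖ * (ε * ‖d m‖) := by
        rw [hres]
        exact (T.le_opNorm _).trans (mul_le_mul_of_nonneg_left hGd (norm_nonneg T))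
      have hTi' : Ti (r m - α m • T (d m)) = -(x m - xsol) - α m • d m := by
        rw [map_sub, _root_.map_smul, hTiT, hrm, map_neg, hTiT]
      have he1 : x (m + 1) - xsol = -(Ti (r m - α m • T (d m))) := by
        rw [hTi', hx m]; abel
      have hn : ‖x (m + 1) - xsol‖ ≤ ‖Ti‖ * (‖T‖ * (ε * ‖d m‖)) := by
        rw [he1, norm_neg]
        exact (Ti.le_opNorm _).trans
          (mul_le_mul_of_nonneg_left (le_trans hmin hresn) (norm_nonneg Ti))
      rw [div_mul_eq_mul_div, le_div_iff₀ h1ε]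
      calc ‖x (m + 1) - xsol‖ * (1 - ε)
          ≤ (‖Ti‖ * (‖T‖ * (ε * ‖d m‖))) * (1 - ε) :=
            mul_le_mul_of_nonneg_right hn h1ε.le
        _ = (K * ε) * ((1 - ε) * ‖d m‖) := by rw [hKdef]; ring
        _ ≤ (K * ε) * ‖x m - xsol‖ :=
            mul_le_mul_of_nonneg_left h3 (mul_nonneg hK0 hε0)
        _ ≤ (1 + K) * ε * ‖x m - xsol‖ := by
            nlinarith [mul_nonneg hε0 (norm_nonneg (x m - xsol))]
  have hbound : ∀ m, ‖x m - xsol‖ ≤ ((1 + K) * ε / (1 - ε)) ^ m * ‖x 0 - xsol‖ := by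
    intro m
    induction m with
    | zero => simp
    | succ k ih =>
      calc ‖x (k + 1) - xsol‖ ≤ ((1 + K) * ε / (1 - ε)) * ‖x k - xsol‖ := key k
        _ ≤ ((1 + K) * ε / (1 - ε)) * (((1 + K) * ε / (1 - ε)) ^ k * ‖x 0 - xsol‖) :=
            mul_le_mul_of_nonneg_left ih hρ0
        _ = ((1 + K) * ε / (1 - ε)) ^ (k + 1) * ‖x 0 - xsol‖ := by ring
  refine ⟨hρ1, hbound, ?_⟩
  rw [tendsto_iff_norm_sub_tendsto_zero]
  have h0 : Filter.Tendsto (fun m => ((1 + K) * ε / (1 - ε)) ^ m * ‖x 0 - xsol‖)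
      Filter.atTop (nhds 0) := by
    simpa using (tendsto_pow_atTop_nhds_zero_of_lt_one hρ0 hρ1).mul_const ‖x 0 - xsol‖
  exact squeeze_zero (fun m => norm_nonneg _) hbound h0
end
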